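/- Let Ω > 0 and define π : ℕ → ℝ by π(0) = 0 and π(n) = Ω^n/(n!·(e^Ω−1)) for n ≥ 1. Then π is nonnegative, ∑_{n=0}^∞ π(n) = 1, and π satisfies the detailed-balance relation n·π(n) = ((n+1)n/Ω)·π(n+1) for every integer n ≥ 0; consequently π satisfies the one-dimensional stationary master equation (n−1)·π(n−1) + ((n+1)n/Ω)·π(n+1) = (n + n(n−1)/Ω)·π(n) for all n ≥ 1 (with π(−1) := 0). (Truncated-Poisson stationarity of the single-species birth–death chain N ⇌ 2N with per-capita birth rate 1 and homocidal death propensity n(n−1)/Ω.) -/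

import Mathlib

/-- Truncated-Poisson stationarity of the single-species birth–death chain `N ⇌ 2N`
with per-capita birth rate `1` and homocidal death propensity `n(n−1)/Ω`. -/
theorem truncated_poisson_detailed_balance
    (Ω : ℝ) (hΩ : 0 < Ω) (π : ℕ → ℝ)
    (hπ0 : π 0 = 0)
    (hπ : ∀ n : ℕ, 1 ≤ n → π n = Ω ^ n / ((Nat.factorial n : ℝ) * (Real.exp Ω - 1))) :
    (∀ n : ℕ, 0 ≤ π n) ∧
    HasSum π 1 ∧
    (∀ n : ℕ, (n : ℝ) * π n = (((n : ℝ) + 1) * (n : ℝ) / Ω) * π (n + 1)) ∧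
    (∀ n : ℕ, 1 ≤ n →
      ((n : ℝ) - 1) * π (n - 1) + (((n : ℝ) + 1) * (n : ℝ) / Ω) * π (n + 1)
        = ((n : ℝ) + (n : ℝ) * ((n : ℝ) - 1) / Ω) * π n) := by
  have hE : (0 : ℝ) < Real.exp Ω - 1 := by
    have := Real.add_one_lt_exp (x := Ω) (by positivity)
    linarith
  have hEne : Real.exp Ω - 1 ≠ 0 := ne_of_gt hE
  have hnonneg : ∀ n : ℕ, 0 ≤ π n := by
    intro n
    rcases Nat.eq_zero_or_pos n with h | h
    · simp [h, hπ0]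
    · rw [hπ n h]
      positivity
  have hdb : ∀ n : ℕ, (n : ℝ) * π n = (((n : ℝ) + 1) * (n : ℝ) / Ω) * π (n + 1) := by
    intro n
    rcases Nat.eq_zero_or_pos n with h | h
    · simp [h, hπ0]
    · rw [hπ n h, hπ (n + 1) (by omega), Nat.factorial_succ]
      have hfac : ((Nat.factorial n : ℝ)) ≠ 0 := by positivity
      have hn1 : ((n : ℝ) + 1) ≠ 0 := by positivity
      push_cast
      field_simp
      ring
  refine ⟨hnonneg, ?_, hdb, ?_⟩
  · have hsum : HasSum (fun n : ℕ => Ω ^ n / (Nat.factorial n : ℝ)) (Real.exp Ω) := by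
      rw [Real.exp_eq_exp_ℝ]
      exact NormedSpace.expSeries_div_hasSum_exp Ω
    have hone : HasSum (fun n : ℕ => if n = 0 then (1 : ℝ) else 0) 1 := hasSum_ite_eq 0 1
    have hsub := hsum.sub hone
    have heq : π = fun n : ℕ =>
        (Ω ^ n / (Nat.factorial n : ℝ) - if n = 0 then (1 : ℝ) else 0) / (Real.exp Ω - 1) := by
      funext n
      rcases Nat.eq_zero_or_pos n with h | h
      · simp [h, hπ0]
      · rw [hπ n h]
        have : n ≠ 0 := by omega
        simp [this, div_div]
    rw [heq]
    have := hsub.div_const (Real.exp Ω - 1)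
    rwa [div_self hEne] at this
  · intro n hn
    have h1 := hdb n
    have h2 := hdb (n - 1)
    have hc : ((n - 1 : ℕ) : ℝ) = (n : ℝ) - 1 := by
      have : (1 : ℕ) ≤ n := hn
      push_cast [this]
      ring
    have hc2 : (n - 1) + 1 = n := by omega
    rw [hc, hc2] at h2
    have hc3 : (n : ℝ) - 1 + 1 = (n : ℝ) := by ring
    rw [hc3] at h2
    rw [h2, ← h1]
    field_simp
    ring
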